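/- For any n×n matrix X over a commutative ring, the coefficient of t^p in det(I_n + t·X) equals the sum of all principal p×p minors of X. -/

import Mathlib

open Polynomial Matrix

/-- For an `n × n` matrix `X` over a commutative ring, the coefficient of `t^p` in
`det(I + t • X)` is the sum of all principal `p × p` minors of `X`. -/
theorem coeff_det_one_add_smul_eq_sum_principal_minors
    (R : Type*) [CommRing R] (n p : ℕ) (X : Matrix (Fin n) (Fin n) R) :
    (Matrix.det ((1 : Matrix (Fin n) (Fin n) (Polynomial R)) +
        (Polynomial.X : Polynomial R) • X.map Polynomial.C)).coeff p =
      ∑ S ∈ Finset.powersetCard p (Finset.univ : Finset (Fin n)),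
        Matrix.det (X.submatrix (fun i : {x // x ∈ S} => (i : Fin n))
          (fun i : {x // x ∈ S} => (i : Fin n))) := by
  classical
  set t := (Polynomial.X : Polynomial R) with ht
  set A := X.map Polynomial.C with hA
  set f := (Matrix.detRowAlternating :
      (Fin n → Polynomial R) [⋀^Fin n]→ₗ[Polynomial R] Polynomial R) with hf
  set e₁ : Fin n → Fin n → Polynomial R :=
      fun i => (1 : Matrix (Fin n) (Fin n) (Polynomial R)) i with he₁
  -- minor of X on a subset s
  set d : Finset (Fin n) → R := fun s =>
    Matrix.det (X.submatrix (fun i : {x // x ∈ s} => (i : Fin n))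
      (fun i : {x // x ∈ s} => (i : Fin n))) with hd
  have key : ((1 : Matrix (Fin n) (Fin n) (Polynomial R)) + t • A).det
      = ∑ s : Finset (Fin n), t ^ s.card • Polynomial.C (d s) := by
    have h0 : ((1 : Matrix (Fin n) (Fin n) (Polynomial R)) + t • A).det
        = f ((fun i => t • A i) + e₁) := by
      show Matrix.detRowAlternating _ = Matrix.detRowAlternating _
      congr 1
      ext i j
      simp [e₁, add_comm, Matrix.add_apply, Matrix.smul_apply]
    rw [h0, show (f ((fun i => t • A i) + e₁)) =
        f.toMultilinearMap ((fun i => t • A i) + e₁) from rfl,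
      f.toMultilinearMap.map_add_univ (fun i => t • A i) e₁]
    refine Finset.sum_congr rfl fun s _ => ?_
    -- rows of the piecewise matrix
    have hpw : s.piecewise (fun i => t • A i) e₁
        = s.piecewise (fun i => t • (s.piecewise (fun i => A i) e₁) i)
            (s.piecewise (fun i => A i) e₁) := by
      funext i
      by_cases hi : i ∈ s <;> simp [Finset.piecewise, hi]
    rw [hpw, f.toMultilinearMap.map_piecewise_smul (fun _ => t)
        (s.piecewise (fun i => A i) e₁) s, Finset.prod_const]
    congr 1
    -- now compute det of the matrix with rows of A on s and identity rows off s
    set N : Matrix (Fin n) (Fin n) (Polynomial R) :=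
      Matrix.of (s.piecewise (fun i => A i) e₁) with hN
    show f (s.piecewise (fun i => A i) e₁) = _
    have hdet : f (s.piecewise (fun i => A i) e₁) = N.det := rfl
    rw [hdet]
    have hblock := Matrix.twoBlockTriangular_det N (· ∈ s) (by
      intro i hi j hj
      have hij : i ≠ j := fun h => hi (h ▸ hj)
      simp [N, Finset.piecewise, hi, e₁, Matrix.one_apply, hij])
    rw [hblock]
    have h2 : (N.toSquareBlockProp fun i => ¬ i ∈ s) = 1 := by
      ext i j
      rcases i with ⟨i, hi⟩
      rcases j with ⟨j, hj⟩
      simp only [Matrix.toSquareBlockProp, Matrix.toBlock_apply, N, Matrix.of_apply,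
        Finset.piecewise, if_neg hi, e₁]
      by_cases hij : i = j
      · subst hij; simp [Matrix.one_apply]
      · simp [Matrix.one_apply, hij, fun h => hij (Subtype.mk.injEq .. ▸ h)]
    have h1 : (N.toSquareBlockProp (· ∈ s)) =
        (X.submatrix (fun i : {x // x ∈ s} => (i : Fin n))
          (fun i : {x // x ∈ s} => (i : Fin n))).map Polynomial.C := by
      ext i j
      rcases i with ⟨i, hi⟩
      simp [Matrix.toSquareBlockProp, Matrix.toBlock_apply, N, Finset.piecewise, hi, A]
    rw [h1, h2, Matrix.det_one, mul_one]
    have hmd := (RingHom.map_det (Polynomial.C : R →+* Polynomial R)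
      (X.submatrix (fun i : {x // x ∈ s} => (i : Fin n))
        (fun i : {x // x ∈ s} => (i : Fin n)))).symm
    convert hmd using 2
    rfl
  rw [key]
  rw [Polynomial.finset_sum_coeff]
  have hco : ∀ s : Finset (Fin n),
      (t ^ s.card • Polynomial.C (d s)).coeff p = if s.card = p then d s else 0 := by
    intro s
    rw [smul_eq_mul, mul_comm, Polynomial.coeff_C_mul, ht, Polynomial.coeff_X_pow]
    by_cases h : s.card = p
    · simp [h]
    · simp [h, Ne.symm h]
  simp_rw [hco]
  rw [Finset.powersetCard_eq_filter, Finset.powerset_univ, Finset.sum_filter]
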